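/- The set F₀ is neither convex nor closed as a subset of ℝ². -/

import Mathlib

/-- The bilevel feasible set of the one-dimensional example. -/
def F0 : Set (ℝ × ℝ) :=
  {q | 0 ≤ q.2 ∧ q.2 ≤ 1 ∧ (∃ k : ℤ, q.1 = (k : ℝ)) ∧ q.2 ≤ q.1 ∧ q.1 ≤ 1 ∧
       ∀ x' : ℤ, q.2 ≤ (x' : ℝ) → (x' : ℝ) ≤ 1 → q.1 ≤ (x' : ℝ)}

lemma zero_mem : ((0 : ℝ), (0 : ℝ)) ∈ F0 := by
  refine ⟨le_refl 0, by norm_num, ⟨0, by norm_num⟩, le_refl 0, by norm_num, ?_⟩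
  intro x' h1 _; simpa using h1

lemma one_mem (z : ℝ) (hz : 0 < z) (hz1 : z ≤ 1) : ((1 : ℝ), z) ∈ F0 := by
  refine ⟨hz.le, hz1, ⟨1, by norm_num⟩, hz1, le_refl 1, ?_⟩
  intro x' h1 _
  have : (0 : ℤ) < x' := by exact_mod_cast hz.trans_le h1
  have h1 : (1 : ℤ) ≤ x' := this
  show (1:ℝ) ≤ (x' : ℝ)
  exact_mod_cast h1

/-- The example's bilevel feasible set `F₀` is neither convex nor closed. -/
theorem F0_not_convex_not_closed :
    ¬ Convex ℝ F0 ∧ ¬ IsClosed F0 := by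
  constructor
  · intro hconv
    have hmid := hconv zero_mem (one_mem 1 one_pos le_rfl)
      (a := 1/2) (b := 1/2) (by norm_num) (by norm_num) (by norm_num)
    obtain ⟨_, _, ⟨k, hk⟩, _⟩ := hmid
    simp only [Prod.smul_mk, smul_eq_mul, Prod.mk_add_mk, mul_zero, mul_one] at hk
    have h1 : ((1:ℝ)/2) = (k : ℝ) := by linarith [hk]
    have h2 : (2 : ℝ) * k = 1 := by linarith
    have h2' : (2 : ℤ) * k = 1 := by exact_mod_cast h2
    omega
  · intro hclosed
    have hseq : Filter.Tendsto (fun n : ℕ => ((1 : ℝ), 1 / (n + 1 : ℝ)))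
        Filter.atTop (nhds ((1 : ℝ), (0 : ℝ))) := by
      refine Filter.Tendsto.prodMk_nhds tendsto_const_nhds ?_
      simpa using tendsto_one_div_add_atTop_nhds_zero_nat (𝕜 := ℝ)
    have hmem : ∀ n : ℕ, ((1 : ℝ), 1 / (n + 1 : ℝ)) ∈ F0 := by
      intro n
      refine one_mem _ (by positivity) ?_
      rw [div_le_one (by positivity)]
      linarith [Nat.cast_nonneg (α := ℝ) n]
    have h10 : ((1 : ℝ), (0 : ℝ)) ∈ F0 :=
      hclosed.mem_of_tendsto hseq (Filter.Eventually.of_forall hmem)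
    obtain ⟨_, _, _, _, _, hmin⟩ := h10
    have := hmin 0 (by norm_num) (by norm_num)
    norm_num at this
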